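/- Let p be an odd prime with p ∤ m₁m₂m₃ and with (m₁m₂/p) = (m₂m₃/p) = (m₃m₁/p) = 1. If additionally p does not divide D(m,n) = Σᵢ mᵢ²nᵢ⁴ − 2Σ_{i<j} mᵢmⱼnᵢ²nⱼ², then S_p(m,n) = −4p³, where S_p(m,n) = Σ_{a∈𝔽_p^×} Σ_{x,y∈𝔽_p³} e_p(a(x₁y₁²+x₂y₂²+x₃y₃²) + m·x + n·y). -/

import Mathlib

/-- e_q(t) = exp(2πit/q). -/
noncomputable def eChar (q : ℕ) (t : ℤ) : ℂ :=
  Complex.exp (2 * Real.pi * Complex.I * (t : ℂ) / (q : ℂ))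

/-- The complete exponential sum S_q(m,n) for F(x,y) = x₁y₁² + x₂y₂² + x₃y₃²:
S_q(m,n) = Σ*_{a mod q} Σ_{x,y mod q} e_q(aF(x,y) + m·x + n·y). -/
noncomputable def expSum (q : ℕ) (m₁ m₂ m₃ n₁ n₂ n₃ : ℤ) : ℂ :=
  ∑ a ∈ (Finset.range q).filter (fun a => Nat.Coprime a q),
    ∑ x₁ ∈ Finset.range q, ∑ x₂ ∈ Finset.range q, ∑ x₃ ∈ Finset.range q,
      ∑ y₁ ∈ Finset.range q, ∑ y₂ ∈ Finset.range q, ∑ y₃ ∈ Finset.range q,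
        eChar q ((a : ℤ) * ((x₁ : ℤ) * (y₁ : ℤ) ^ 2 + (x₂ : ℤ) * (y₂ : ℤ) ^ 2
            + (x₃ : ℤ) * (y₃ : ℤ) ^ 2)
          + m₁ * (x₁ : ℤ) + m₂ * (x₂ : ℤ) + m₃ * (x₃ : ℤ)
          + n₁ * (y₁ : ℤ) + n₂ * (y₂ : ℤ) + n₃ * (y₃ : ℤ))

private lemma eChar_eq (p : ℕ) [NeZero p] (t : ℤ) : eChar p t = ZMod.stdAddChar (t : ZMod p) := by
  rw [ZMod.stdAddChar_coe]; rfl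

private lemma sum_range_zmod {p : ℕ} [NeZero p] {M : Type*} [AddCommMonoid M] (g : ZMod p → M) :
    ∑ i ∈ Finset.range p, g (i : ZMod p) = ∑ x : ZMod p, g x := by
  refine Finset.sum_nbij' (fun i => (i : ZMod p)) (fun x => x.val) ?_ ?_ ?_ ?_ ?_ <;>
    simp_all [ZMod.val_lt, ZMod.natCast_zmod_val, ZMod.val_cast_of_lt, Finset.mem_range,
      Nat.mod_eq_of_lt]

private lemma sum_filter_coprime {p : ℕ} [hp : Fact p.Prime] {M : Type*} [AddCommMonoid M]
    (g : ZMod p → M) :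
    ∑ i ∈ (Finset.range p).filter (fun a => Nat.Coprime a p), g (i : ZMod p)
      = ∑ x ∈ Finset.univ.filter (fun x : ZMod p => x ≠ 0), g x := by
  classical
  rw [Finset.sum_filter, Finset.sum_filter]
  rw [show (fun i : ℕ => if Nat.Coprime i p then g (i : ZMod p) else 0)
      = fun i : ℕ => if ((i : ZMod p) ≠ 0) then g (i : ZMod p) else 0 from ?_]
  · exact sum_range_zmod (fun x => if x ≠ 0 then g x else 0)
  · funext i
    congr 1
    simp only [eq_iff_iff, Ne, ZMod.natCast_eq_zero_iff]
    rw [Nat.coprime_comm]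
    exact (Nat.Prime.coprime_iff_not_dvd hp.out)

private lemma sum_psi_mul (p : ℕ) [NeZero p] (b : ZMod p) :
    ∑ x : ZMod p, ZMod.stdAddChar (x * b) = if b = 0 then (p : ℂ) else 0 := by
  classical
  simpa [ZMod.card] using AddChar.sum_mulShift b (ZMod.isPrimitive_stdAddChar p)

private lemma hsum {p : ℕ} [NeZero p] (L : ZMod p) (hL : L ≠ 0) :
    ∑ t ∈ Finset.univ.filter (fun t : ZMod p => t ≠ 0), ZMod.stdAddChar (L * t) = -1 := by
  classical
  have h0 : ∑ t : ZMod p, ZMod.stdAddChar (L * t) = 0 := by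
    simp only [mul_comm L]
    rw [sum_psi_mul p L, if_neg hL]
  have hsplit := Finset.sum_filter_add_sum_filter_not Finset.univ
    (fun t : ZMod p => t ≠ 0) (fun t => ZMod.stdAddChar (L * t))
  have h1 : Finset.univ.filter (fun t : ZMod p => ¬ t ≠ 0) = {0} := by
    ext t; simp
  rw [h0, h1, Finset.sum_singleton, mul_zero, AddChar.map_zero_eq_one] at hsplit
  linear_combination hsplit

private lemma key_id {R : Type*} [CommRing R] (e₁ e₂ e₃ ν₁ ν₂ ν₃ s₂ s₃ μ₁ μ₂ μ₃ : R)
    (he₁ : e₁ ^ 2 = 1) (he₂ : e₂ ^ 2 = 1) (he₃ : e₃ ^ 2 = 1)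
    (hμ₂ : μ₂ = μ₁ * s₂ ^ 2) (hμ₃ : μ₃ = μ₁ * s₃ ^ 2)
    (h : e₁ * ν₁ + e₂ * (ν₂ * s₂) + e₃ * (ν₃ * s₃) = 0) :
    μ₁ ^ 2 * ν₁ ^ 4 + μ₂ ^ 2 * ν₂ ^ 4 + μ₃ ^ 2 * ν₃ ^ 4
      - 2 * (μ₁ * μ₂ * ν₁ ^ 2 * ν₂ ^ 2 + μ₁ * μ₃ * ν₁ ^ 2 * ν₃ ^ 2
        + μ₂ * μ₃ * ν₂ ^ 2 * ν₃ ^ 2) = 0 := by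
  subst hμ₂ hμ₃
  set u := e₁ * ν₁ with hu
  set v := e₂ * (ν₂ * s₂) with hv
  set w := e₃ * (ν₃ * s₃) with hw
  linear_combination (μ₁^2 * (ν₁^2 + u^2 - 2*(s₂^2*ν₂^2) - 2*(s₃^2*ν₃^2)) * (-ν₁^2)) * he₁
    + (μ₁^2 * ((s₂^2*ν₂^2) + v^2 - 2*u^2 - 2*(s₃^2*ν₃^2)) * (-(ν₂^2*s₂^2))) * he₂
    + (μ₁^2 * ((s₃^2*ν₃^2) + w^2 - 2*u^2 - 2*v^2) * (-(ν₃^2*s₃^2))) * he₃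
    + (-μ₁^2 * ((-u+v+w) * (u-v+w) * (u+v-w))) * h

private lemma mul3sum {α : Type*} (s : Finset α) (g₁ g₂ g₃ : α → ℂ) :
    (∑ x ∈ s, g₁ x) * (∑ x ∈ s, g₂ x) * (∑ x ∈ s, g₃ x)
      = ∑ x₁ ∈ s, ∑ x₂ ∈ s, ∑ x₃ ∈ s, g₁ x₁ * g₂ x₂ * g₃ x₃ := by
  rw [Finset.sum_mul_sum, Finset.sum_mul]
  exact Finset.sum_congr rfl fun x₁ _ => by rw [Finset.sum_mul_sum]

private lemma factor6 {p : ℕ} [hp : Fact p.Prime] (f₁ f₂ f₃ : ZMod p → ZMod p → ℂ) :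
    ∑ x₁ : ZMod p, ∑ x₂ : ZMod p, ∑ x₃ : ZMod p, ∑ y₁ : ZMod p, ∑ y₂ : ZMod p, ∑ y₃ : ZMod p,
      f₁ x₁ y₁ * f₂ x₂ y₂ * f₃ x₃ y₃
    = (∑ x : ZMod p, ∑ y : ZMod p, f₁ x y) * (∑ x : ZMod p, ∑ y : ZMod p, f₂ x y)
      * (∑ x : ZMod p, ∑ y : ZMod p, f₃ x y) := by
  rw [mul3sum]
  exact Finset.sum_congr rfl fun x₁ _ => Finset.sum_congr rfl fun x₂ _ =>
    Finset.sum_congr rfl fun x₃ _ => (mul3sum _ _ _ _).symm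

private lemma splitpsi {p : ℕ} [hp : Fact p.Prime] (a μ₁ μ₂ μ₃ ν₁ ν₂ ν₃ : ZMod p)
    (x₁ x₂ x₃ y₁ y₂ y₃ : ZMod p) :
    ZMod.stdAddChar (a * (x₁ * y₁ ^ 2 + x₂ * y₂ ^ 2 + x₃ * y₃ ^ 2)
        + μ₁ * x₁ + μ₂ * x₂ + μ₃ * x₃ + ν₁ * y₁ + ν₂ * y₂ + ν₃ * y₃)
      = ZMod.stdAddChar (a * (x₁ * y₁ ^ 2) + μ₁ * x₁ + ν₁ * y₁)
        * ZMod.stdAddChar (a * (x₂ * y₂ ^ 2) + μ₂ * x₂ + ν₂ * y₂)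
        * ZMod.stdAddChar (a * (x₃ * y₃ ^ 2) + μ₃ * x₃ + ν₃ * y₃) := by
  rw [← AddChar.map_add_eq_mul, ← AddChar.map_add_eq_mul]
  congr 1
  ring

private lemma stepH {p : ℕ} [hp : Fact p.Prime] (a μ ν : ZMod p) :
    ∑ x : ZMod p, ∑ y : ZMod p, ZMod.stdAddChar (a * (x * y ^ 2) + μ * x + ν * y)
      = (p : ℂ) * ∑ y ∈ Finset.univ.filter (fun y : ZMod p => a * y ^ 2 + μ = 0),
          ZMod.stdAddChar (ν * y) := by
  classical
  have h1 : ∀ x y : ZMod p, ZMod.stdAddChar (a * (x * y ^ 2) + μ * x + ν * y)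
      = ZMod.stdAddChar (x * (a * y ^ 2 + μ)) * ZMod.stdAddChar (ν * y) := by
    intro x y
    rw [← AddChar.map_add_eq_mul]
    congr 1
    ring
  simp only [h1]
  rw [Finset.sum_comm]
  have h2 : ∀ y : ZMod p, ∑ x : ZMod p, ZMod.stdAddChar (x * (a * y ^ 2 + μ))
        * ZMod.stdAddChar (ν * y)
      = (if a * y ^ 2 + μ = 0 then (p : ℂ) else 0) * ZMod.stdAddChar (ν * y) := by
    intro y
    rw [← Finset.sum_mul, sum_psi_mul]
  simp only [h2, ite_mul, zero_mul, Finset.sum_ite, Finset.sum_const_zero, add_zero,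
    ← Finset.mul_sum]

private lemma step1 (p : ℕ) [hp : Fact p.Prime] (m₁ m₂ m₃ n₁ n₂ n₃ : ℤ) :
    expSum p m₁ m₂ m₃ n₁ n₂ n₃
      = ∑ a ∈ Finset.univ.filter (fun a : ZMod p => a ≠ 0),
          ∑ x₁ : ZMod p, ∑ x₂ : ZMod p, ∑ x₃ : ZMod p,
            ∑ y₁ : ZMod p, ∑ y₂ : ZMod p, ∑ y₃ : ZMod p,
              ZMod.stdAddChar (a * (x₁ * y₁ ^ 2 + x₂ * y₂ ^ 2 + x₃ * y₃ ^ 2)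
                + (m₁ : ZMod p) * x₁ + (m₂ : ZMod p) * x₂ + (m₃ : ZMod p) * x₃
                + (n₁ : ZMod p) * y₁ + (n₂ : ZMod p) * y₂ + (n₃ : ZMod p) * y₃) := by
  classical
  unfold expSum
  simp only [eChar_eq p]
  push_cast
  simp only [← sum_range_zmod, ← sum_filter_coprime]

private lemma Tsum {p : ℕ} [hp : Fact p.Prime] (hp2 : p ≠ 2) (μ₁ μ c ν t : ZMod p)
    (hμ₁ : μ₁ ≠ 0) (hc : c ≠ 0) (ht : t ≠ 0) (hμ : μ = μ₁ * c ^ 2) :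
    ∑ y ∈ Finset.univ.filter (fun y : ZMod p => -μ₁ * (t ^ 2)⁻¹ * y ^ 2 + μ = 0),
        ZMod.stdAddChar (ν * y)
      = ∑ e ∈ ({1, -1} : Finset (ZMod p)), ZMod.stdAddChar (e * (ν * c) * t) := by
  classical
  haveI : Fact (2 < p) := ⟨lt_of_le_of_ne hp.out.two_le (Ne.symm hp2)⟩
  have h2 : (2 : ZMod p) ≠ 0 := by
    have := ZMod.neg_one_ne_one (n := p)
    intro h
    apply this
    linear_combination -h
  have hne11 : (1 : ZMod p) ≠ -1 := fun h => ZMod.neg_one_ne_one (n := p) h.symm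
  have hct : c * t ≠ 0 := mul_ne_zero hc ht
  have hA : -μ₁ * (t ^ 2)⁻¹ ≠ 0 := by
    apply mul_ne_zero (neg_ne_zero.mpr hμ₁)
    exact inv_ne_zero (pow_ne_zero 2 ht)
  have hkey : ∀ y : ZMod p, -μ₁ * (t ^ 2)⁻¹ * y ^ 2 + μ
      = -μ₁ * (t ^ 2)⁻¹ * ((y - c * t) * (y + c * t)) := by
    intro y
    rw [hμ]
    field_simp
    ring
  have hfil : Finset.univ.filter (fun y : ZMod p => -μ₁ * (t ^ 2)⁻¹ * y ^ 2 + μ = 0)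
      = {c * t, -(c * t)} := by
    ext y
    simp only [Finset.mem_filter, Finset.mem_univ, true_and, hkey, Finset.mem_insert,
      Finset.mem_singleton]
    rw [mul_eq_zero, or_iff_right hA, mul_eq_zero, sub_eq_zero, add_eq_zero_iff_eq_neg]
  have hctne : c * t ≠ -(c * t) := by
    intro h
    apply hct
    have h4 : (2 : ZMod p) * (c * t) = 0 := by linear_combination h
    rcases mul_eq_zero.mp h4 with h5 | h5
    · exact absurd h5 h2
    · exact h5
  rw [hfil, Finset.sum_pair hctne, Finset.sum_pair hne11]
  congr 1 <;> exact congrArg _ (by ring)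

private lemma main_sum {p : ℕ} [hp : Fact p.Prime] (hp2 : p ≠ 2)
    (μ₁ μ₂ μ₃ ν₁ ν₂ ν₃ s₂ s₃ : ZMod p)
    (hμ₁ : μ₁ ≠ 0) (hs₂0 : s₂ ≠ 0) (hs₃0 : s₃ ≠ 0)
    (hs₂ : μ₂ = μ₁ * s₂ ^ 2) (hs₃ : μ₃ = μ₁ * s₃ ^ 2)
    (hLne : ∀ e₁ e₂ e₃ : ZMod p, e₁ ^ 2 = 1 → e₂ ^ 2 = 1 → e₃ ^ 2 = 1 →
      e₁ * ν₁ + e₂ * (ν₂ * s₂) + e₃ * (ν₃ * s₃) ≠ 0) :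
    ∑ a ∈ Finset.univ.filter (fun a : ZMod p => a ≠ 0),
      ((∑ y ∈ Finset.univ.filter (fun y : ZMod p => a * y ^ 2 + μ₁ = 0), ZMod.stdAddChar (ν₁ * y))
        * (∑ y ∈ Finset.univ.filter (fun y : ZMod p => a * y ^ 2 + μ₂ = 0),
            ZMod.stdAddChar (ν₂ * y))
        * (∑ y ∈ Finset.univ.filter (fun y : ZMod p => a * y ^ 2 + μ₃ = 0),
            ZMod.stdAddChar (ν₃ * y))) = -4 := by
  classical
  haveI : Fact (2 < p) := ⟨lt_of_le_of_ne hp.out.two_le (Ne.symm hp2)⟩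
  have hne11 : (1 : ZMod p) ≠ -1 := fun h => ZMod.neg_one_ne_one (n := p) h.symm
  have h2 : (2 : ZMod p) ≠ 0 := by
    intro h
    exact ZMod.neg_one_ne_one (n := p) (by linear_combination -h)
  set A : Finset (ZMod p) := Finset.univ.filter (fun a : ZMod p => a ≠ 0) with hA
  set G : ZMod p → ℂ := fun a =>
    (∑ y ∈ Finset.univ.filter (fun y : ZMod p => a * y ^ 2 + μ₁ = 0), ZMod.stdAddChar (ν₁ * y))
      * (∑ y ∈ Finset.univ.filter (fun y : ZMod p => a * y ^ 2 + μ₂ = 0),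
          ZMod.stdAddChar (ν₂ * y))
      * (∑ y ∈ Finset.univ.filter (fun y : ZMod p => a * y ^ 2 + μ₃ = 0),
          ZMod.stdAddChar (ν₃ * y)) with hG
  show ∑ a ∈ A, G a = -4
  set φ : ZMod p → ZMod p := fun t => -μ₁ * (t ^ 2)⁻¹ with hφ
  have hmemA : ∀ t : ZMod p, t ∈ A ↔ t ≠ 0 := by
    intro t; simp [hA]
  have hφA : ∀ t ∈ A, φ t ∈ A := by
    intro t ht
    rw [hmemA] at ht ⊢
    exact mul_ne_zero (neg_ne_zero.mpr hμ₁) (inv_ne_zero (pow_ne_zero 2 ht))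
  have himg_sub : A.image φ ⊆ A := Finset.image_subset_iff.mpr hφA
  -- vanishing off the image
  have hvanish : ∀ a ∈ A, a ∉ A.image φ → G a = 0 := by
    intro a ha hna
    have hempty : Finset.univ.filter (fun y : ZMod p => a * y ^ 2 + μ₁ = 0) = ∅ := by
      rw [Finset.filter_eq_empty_iff]
      intro y _
      intro hy
      apply hna
      have hy0 : y ≠ 0 := by
        rintro rfl
        apply hμ₁
        simpa using hy
      refine Finset.mem_image.mpr ⟨y, (hmemA y).mpr hy0, ?_⟩
      show -μ₁ * (y ^ 2)⁻¹ = a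
      have hy2 : y ^ 2 ≠ 0 := pow_ne_zero 2 hy0
      field_simp
      linear_combination -hy
    rw [hG]
    simp only [hempty, Finset.sum_empty, zero_mul]
  -- fibers of φ have two elements
  have hfib : ∀ b ∈ A.image φ, (A.filter (fun t => φ t = b)).card = 2 := by
    intro b hb
    obtain ⟨t₀, ht₀A, rfl⟩ := Finset.mem_image.mp hb
    have ht₀ : t₀ ≠ 0 := (hmemA t₀).mp ht₀A
    have hfil : A.filter (fun t => φ t = φ t₀) = {t₀, -t₀} := by
      ext t
      simp only [Finset.mem_filter, hmemA, Finset.mem_insert, Finset.mem_singleton]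
      constructor
      · rintro ⟨ht, heq⟩
        have hsq : t ^ 2 = t₀ ^ 2 := by
          have heq' : (t ^ 2)⁻¹ = (t₀ ^ 2)⁻¹ :=
            mul_left_cancel₀ (neg_ne_zero.mpr hμ₁) heq
          exact inv_inj.mp heq'
        have : (t - t₀) * (t + t₀) = 0 := by linear_combination hsq
        rcases mul_eq_zero.mp this with h | h
        · exact Or.inl (by linear_combination h)
        · exact Or.inr (by linear_combination h)
      · rintro (rfl | rfl)
        · exact ⟨ht₀, rfl⟩
        · refine ⟨neg_ne_zero.mpr ht₀, ?_⟩
          show -μ₁ * ((-t₀) ^ 2)⁻¹ = -μ₁ * (t₀ ^ 2)⁻¹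
          rw [neg_sq]
    rw [hfil]
    rw [Finset.card_insert_of_notMem, Finset.card_singleton]
    simp only [Finset.mem_singleton]
    intro h
    apply ht₀
    have h4 : (2 : ZMod p) * t₀ = 0 := by linear_combination h
    rcases mul_eq_zero.mp h4 with h5 | h5
    · exact absurd h5 h2
    · exact h5
  -- value of G on the image, parametrized by t
  have hGφ : ∀ t ∈ A, G (φ t)
      = ∑ e₁ ∈ ({1, -1} : Finset (ZMod p)), ∑ e₂ ∈ ({1, -1} : Finset (ZMod p)),
          ∑ e₃ ∈ ({1, -1} : Finset (ZMod p)),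
            ZMod.stdAddChar (e₁ * (ν₁ * 1) * t) * ZMod.stdAddChar (e₂ * (ν₂ * s₂) * t)
              * ZMod.stdAddChar (e₃ * (ν₃ * s₃) * t) := by
    intro t ht
    have ht0 : t ≠ 0 := (hmemA t).mp ht
    have h1 : G (φ t)
        = (∑ e ∈ ({1, -1} : Finset (ZMod p)), ZMod.stdAddChar (e * (ν₁ * 1) * t))
          * (∑ e ∈ ({1, -1} : Finset (ZMod p)), ZMod.stdAddChar (e * (ν₂ * s₂) * t))
          * (∑ e ∈ ({1, -1} : Finset (ZMod p)), ZMod.stdAddChar (e * (ν₃ * s₃) * t)) := by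
      rw [hG, hφ]
      simp only []
      rw [Tsum hp2 μ₁ μ₁ 1 ν₁ t hμ₁ one_ne_zero ht0 (by ring),
        Tsum hp2 μ₁ μ₂ s₂ ν₂ t hμ₁ hs₂0 ht0 hs₂,
        Tsum hp2 μ₁ μ₃ s₃ ν₃ t hμ₁ hs₃0 ht0 hs₃]
    rw [h1, mul3sum]
  -- sum over t of G (φ t)
  have hTsum : ∑ t ∈ A, G (φ t) = -8 := by
    have hsqE : ∀ e ∈ ({1, -1} : Finset (ZMod p)), e ^ 2 = 1 := by
      intro e he
      rcases Finset.mem_insert.mp he with rfl | he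
      · exact one_pow 2
      · rw [Finset.mem_singleton.mp he]; exact neg_one_sq
    calc ∑ t ∈ A, G (φ t)
        = ∑ t ∈ A, ∑ e₁ ∈ ({1, -1} : Finset (ZMod p)), ∑ e₂ ∈ ({1, -1} : Finset (ZMod p)),
            ∑ e₃ ∈ ({1, -1} : Finset (ZMod p)),
              ZMod.stdAddChar (e₁ * (ν₁ * 1) * t) * ZMod.stdAddChar (e₂ * (ν₂ * s₂) * t)
                * ZMod.stdAddChar (e₃ * (ν₃ * s₃) * t) := Finset.sum_congr rfl hGφ
      _ = ∑ e₁ ∈ ({1, -1} : Finset (ZMod p)), ∑ e₂ ∈ ({1, -1} : Finset (ZMod p)),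
            ∑ e₃ ∈ ({1, -1} : Finset (ZMod p)), ∑ t ∈ A,
              ZMod.stdAddChar (e₁ * (ν₁ * 1) * t) * ZMod.stdAddChar (e₂ * (ν₂ * s₂) * t)
                * ZMod.stdAddChar (e₃ * (ν₃ * s₃) * t) := by
          rw [Finset.sum_comm]
          exact Finset.sum_congr rfl fun e₁ _ => by
            rw [Finset.sum_comm]
            exact Finset.sum_congr rfl fun e₂ _ => Finset.sum_comm
      _ = ∑ e₁ ∈ ({1, -1} : Finset (ZMod p)), ∑ e₂ ∈ ({1, -1} : Finset (ZMod p)),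
            ∑ e₃ ∈ ({1, -1} : Finset (ZMod p)), (-1 : ℂ) := by
          refine Finset.sum_congr rfl fun e₁ he₁ => Finset.sum_congr rfl fun e₂ he₂ =>
            Finset.sum_congr rfl fun e₃ he₃ => ?_
          have hL : e₁ * (ν₁ * 1) + e₂ * (ν₂ * s₂) + e₃ * (ν₃ * s₃) ≠ 0 := by
            intro h
            exact hLne e₁ e₂ e₃ (hsqE _ he₁) (hsqE _ he₂) (hsqE _ he₃) (by linear_combination h)
          have hmerge : ∀ u : ZMod p,
              ZMod.stdAddChar (e₁ * (ν₁ * 1) * u) * ZMod.stdAddChar (e₂ * (ν₂ * s₂) * u)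
                * ZMod.stdAddChar (e₃ * (ν₃ * s₃) * u)
              = ZMod.stdAddChar ((e₁ * (ν₁ * 1) + e₂ * (ν₂ * s₂) + e₃ * (ν₃ * s₃)) * u) := by
            intro u
            rw [← AddChar.map_add_eq_mul, ← AddChar.map_add_eq_mul]
            exact congrArg _ (by ring)
          simp only [hmerge]
          exact hsum _ hL
      _ = -8 := by
          have hcardE : ({1, -1} : Finset (ZMod p)).card = 2 := by
            rw [Finset.card_insert_of_notMem (by simpa using hne11), Finset.card_singleton]
          simp only [Finset.sum_const, hcardE]
          norm_num
  -- putting it together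
  have htwo : (2 : ℂ) * ∑ a ∈ A, G a = -8 := by
    calc (2 : ℂ) * ∑ a ∈ A, G a = 2 * ∑ a ∈ A.image φ, G a := by
          rw [Finset.sum_subset himg_sub hvanish]
      _ = ∑ b ∈ A.image φ, 2 * G b := Finset.mul_sum _ _ _
      _ = ∑ b ∈ A.image φ, (A.filter (fun t => φ t = b)).card • G b :=
          Finset.sum_congr rfl fun b hb => by rw [hfib b hb, two_nsmul, two_mul]
      _ = ∑ t ∈ A, G (φ t) := (Finset.sum_comp G φ).symm
      _ = -8 := hTsum
  linear_combination htwo / 2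

/-- If p is an odd prime, p ∤ m₁m₂m₃, (m₁m₂/p) = (m₂m₃/p) = (m₃m₁/p) = 1 and
p ∤ D(m,n), then S_p(m,n) = −4p³. -/
theorem stmt13 (p : ℕ) [hp : Fact p.Prime] (hp2 : p ≠ 2)
    (m₁ m₂ m₃ n₁ n₂ n₃ : ℤ) (hm : ¬ (p : ℤ) ∣ m₁ * m₂ * m₃)
    (h12 : legendreSym p (m₁ * m₂) = 1) (h23 : legendreSym p (m₂ * m₃) = 1)
    (h31 : legendreSym p (m₃ * m₁) = 1)
    (hD : ¬ (p : ℤ) ∣ (m₁ ^ 2 * n₁ ^ 4 + m₂ ^ 2 * n₂ ^ 4 + m₃ ^ 2 * n₃ ^ 4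
      - 2 * (m₁ * m₂ * n₁ ^ 2 * n₂ ^ 2 + m₁ * m₃ * n₁ ^ 2 * n₃ ^ 2
        + m₂ * m₃ * n₂ ^ 2 * n₃ ^ 2))) :
    expSum p m₁ m₂ m₃ n₁ n₂ n₃ = -4 * (p : ℂ) ^ 3 := by
    classical
  have hmZ : ((m₁ * m₂ * m₃ : ℤ) : ZMod p) ≠ 0 := by
    rwa [Ne, ZMod.intCast_zmod_eq_zero_iff_dvd]
  push_cast at hmZ
  have hm₁ : ((m₁ : ℤ) : ZMod p) ≠ 0 := fun h => hmZ (by rw [h]; ring)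
  have hm₂ : ((m₂ : ℤ) : ZMod p) ≠ 0 := fun h => hmZ (by rw [h]; ring)
  have hm₃ : ((m₃ : ℤ) : ZMod p) ≠ 0 := fun h => hmZ (by rw [h]; ring)
  -- square roots
  have h12' : IsSquare (((m₁ * m₂ : ℤ)) : ZMod p) := by
    refine (legendreSym.eq_one_iff p ?_).mp h12
    push_cast
    exact mul_ne_zero hm₁ hm₂
  have h31' : IsSquare (((m₃ * m₁ : ℤ)) : ZMod p) := by
    refine (legendreSym.eq_one_iff p ?_).mp h31
    push_cast
    exact mul_ne_zero hm₃ hm₁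
  obtain ⟨w₂, hw₂⟩ := h12'
  obtain ⟨w₃, hw₃⟩ := h31'
  push_cast at hw₂ hw₃
  have hs₂ : ((m₂ : ℤ) : ZMod p) = ((m₁ : ℤ) : ZMod p) * (w₂ * ((m₁ : ℤ) : ZMod p)⁻¹) ^ 2 := by
    field_simp
    linear_combination hw₂
  have hs₃ : ((m₃ : ℤ) : ZMod p) = ((m₁ : ℤ) : ZMod p) * (w₃ * ((m₁ : ℤ) : ZMod p)⁻¹) ^ 2 := by
    field_simp
    linear_combination hw₃
  set s₂ : ZMod p := w₂ * ((m₁ : ℤ) : ZMod p)⁻¹ with hs₂def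
  set s₃ : ZMod p := w₃ * ((m₁ : ℤ) : ZMod p)⁻¹ with hs₃def
  have hs₂0 : s₂ ≠ 0 := by
    intro h
    apply hm₂
    rw [hs₂, h]
    ring
  have hs₃0 : s₃ ≠ 0 := by
    intro h
    apply hm₃
    rw [hs₃, h]
    ring
  -- the key nonvanishing
  have hLne : ∀ e₁ e₂ e₃ : ZMod p, e₁ ^ 2 = 1 → e₂ ^ 2 = 1 → e₃ ^ 2 = 1 →
      e₁ * ((n₁ : ℤ) : ZMod p) + e₂ * (((n₂ : ℤ) : ZMod p) * s₂)
        + e₃ * (((n₃ : ℤ) : ZMod p) * s₃) ≠ 0 := by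
    intro e₁ e₂ e₃ he₁ he₂ he₃ h
    apply hD
    rw [← ZMod.intCast_zmod_eq_zero_iff_dvd]
    push_cast
    linear_combination key_id e₁ e₂ e₃ ((n₁ : ℤ) : ZMod p) ((n₂ : ℤ) : ZMod p)
      ((n₃ : ℤ) : ZMod p) s₂ s₃ ((m₁ : ℤ) : ZMod p) ((m₂ : ℤ) : ZMod p) ((m₃ : ℤ) : ZMod p)
      he₁ he₂ he₃ hs₂ hs₃ h
  rw [step1]
  have hstep : ∀ a ∈ Finset.univ.filter (fun a : ZMod p => a ≠ 0),
      (∑ x₁ : ZMod p, ∑ x₂ : ZMod p, ∑ x₃ : ZMod p,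
        ∑ y₁ : ZMod p, ∑ y₂ : ZMod p, ∑ y₃ : ZMod p,
          ZMod.stdAddChar (a * (x₁ * y₁ ^ 2 + x₂ * y₂ ^ 2 + x₃ * y₃ ^ 2)
            + ((m₁ : ℤ) : ZMod p) * x₁ + ((m₂ : ℤ) : ZMod p) * x₂ + ((m₃ : ℤ) : ZMod p) * x₃
            + ((n₁ : ℤ) : ZMod p) * y₁ + ((n₂ : ℤ) : ZMod p) * y₂ + ((n₃ : ℤ) : ZMod p) * y₃))
      = (p : ℂ) ^ 3 *
        ((∑ y ∈ Finset.univ.filter (fun y : ZMod p => a * y ^ 2 + ((m₁ : ℤ) : ZMod p) = 0),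
            ZMod.stdAddChar (((n₁ : ℤ) : ZMod p) * y))
          * (∑ y ∈ Finset.univ.filter (fun y : ZMod p => a * y ^ 2 + ((m₂ : ℤ) : ZMod p) = 0),
              ZMod.stdAddChar (((n₂ : ℤ) : ZMod p) * y))
          * (∑ y ∈ Finset.univ.filter (fun y : ZMod p => a * y ^ 2 + ((m₃ : ℤ) : ZMod p) = 0),
              ZMod.stdAddChar (((n₃ : ℤ) : ZMod p) * y))) := by
    intro a ha
    simp only [splitpsi]
    refine Eq.trans (factor6
      (fun x y => ZMod.stdAddChar (a * (x * y ^ 2) + ((m₁ : ℤ) : ZMod p) * x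
        + ((n₁ : ℤ) : ZMod p) * y))
      (fun x y => ZMod.stdAddChar (a * (x * y ^ 2) + ((m₂ : ℤ) : ZMod p) * x
        + ((n₂ : ℤ) : ZMod p) * y))
      (fun x y => ZMod.stdAddChar (a * (x * y ^ 2) + ((m₃ : ℤ) : ZMod p) * x
        + ((n₃ : ℤ) : ZMod p) * y))) ?_
    simp only [stepH]
    ring
  rw [Finset.sum_congr rfl hstep, ← Finset.mul_sum,
    main_sum hp2 _ _ _ _ _ _ _ _ hm₁ hs₂0 hs₃0 hs₂ hs₃ hLne]
  ring
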